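/- Continuity of induced matrix functions on commuting tuples: if f: Ω → ℝ is continuous on an open Ω ⊆ ℝ^d, then the induced matrix function F is continuous on CS^d_n(Ω), i.e., if S_k → S in CS^d_n with all joint spectra in Ω, then F(S_k) → F(S). -/

import Mathlib

open Filter

set_option maxHeartbeats 1000000 in
/-- Continuity of induced matrix functions on commuting tuples: if `f` is
continuous on the open set `Ω ⊆ ℝ^d` and `S_k → S` in `CS^d_n` with all joint spectra in
`Ω`, then `F(S_k) → F(S)`, where `F` acts through a simultaneous diagonalization. -/
theorem stmt19 (d n : ℕ) (Ω : Set (Fin d → ℝ)) (hΩ : IsOpen Ω)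
    (f : (Fin d → ℝ) → ℝ) (hf : ContinuousOn f Ω)
    (S : ℕ → Fin d → Matrix (Fin n) (Fin n) ℂ)
    (T : Fin d → Matrix (Fin n) (Fin n) ℂ)
    (U : ℕ → Matrix (Fin n) (Fin n) ℂ) (V : Matrix (Fin n) (Fin n) ℂ)
    (hU : ∀ k, U k ∈ Matrix.unitaryGroup (Fin n) ℂ)
    (hV : V ∈ Matrix.unitaryGroup (Fin n) ℂ)
    (x : ℕ → Fin n → Fin d → ℝ) (y : Fin n → Fin d → ℝ)
    (hxΩ : ∀ k i, x k i ∈ Ω) (hyΩ : ∀ i, y i ∈ Ω)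
    (hdiagS : ∀ k r, S k r = U k * Matrix.diagonal (fun i => (x k i r : ℂ)) * star (U k))
    (hdiagT : ∀ r, T r = V * Matrix.diagonal (fun i => (y i r : ℂ)) * star V)
    (hconv : ∀ r i j, Tendsto (fun k => S k r i j) atTop (nhds (T r i j))) :
    ∀ i j, Tendsto
      (fun k => (U k * Matrix.diagonal (fun i' => (f (x k i') : ℂ)) * star (U k)) i j)
      atTop
      (nhds ((V * Matrix.diagonal (fun i' => (f (y i') : ℂ)) * star V) i j)) := by
  classical
  haveI : FirstCountableTopology (Matrix (Fin n) (Fin n) ℂ) :=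
    inferInstanceAs (FirstCountableTopology (Fin n → Fin n → ℂ))
  have hVmul : V * star V = 1 := Matrix.mem_unitaryGroup_iff.mp hV
  have hVmul' : star V * V = 1 := Matrix.mem_unitaryGroup_iff'.mp hV
  -- continuity of (A, v) ↦ A * diagonal v * A*
  have hc3 : Continuous (fun p : Matrix (Fin n) (Fin n) ℂ × (Fin n → ℂ) =>
      p.1 * Matrix.diagonal p.2 * star p.1) :=
    (continuous_fst.matrix_mul (continuous_snd.matrix_diagonal)).matrix_mul continuous_fst.star
  -- full-matrix convergence of S to T
  have hSmat : ∀ r, Tendsto (fun k => S k r) atTop (nhds (T r)) := fun r =>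
    tendsto_pi_nhds.mpr fun i => tendsto_pi_nhds.mpr fun j => hconv r i j
  -- eigenvalue formula
  have hxformula : ∀ k r, star (U k) * S k r * U k
      = Matrix.diagonal (fun i => (x k i r : ℂ)) := by
    intro k r
    have h1 : star (U k) * U k = 1 := Matrix.mem_unitaryGroup_iff'.mp (hU k)
    rw [hdiagS k r]
    simp only [Matrix.mul_assoc, h1, Matrix.mul_one]
    rw [← Matrix.mul_assoc, h1, Matrix.one_mul]
  have hxentry : ∀ k i r, (x k i r : ℂ) = (star (U k) * S k r * U k) i i := by
    intro k i r
    rw [hxformula k r, Matrix.diagonal_apply_eq]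
  -- compact set containing all unitaries
  have hK : IsCompact {A : Matrix (Fin n) (Fin n) ℂ | ∀ i j, A i j ∈ Metric.closedBall (0:ℂ) 1} := by
    have : {A : Matrix (Fin n) (Fin n) ℂ | ∀ i j, A i j ∈ Metric.closedBall (0:ℂ) 1}
        = Set.univ.pi (fun _ : Fin n => Set.univ.pi fun _ : Fin n => Metric.closedBall (0:ℂ) 1) := by
      ext A
      constructor
      · intro h i _ j _; exact h i j
      · intro h i j; exact h i (Set.mem_univ i) j (Set.mem_univ j)
    rw [this]
    exact isCompact_univ_pi fun i => isCompact_univ_pi fun j => isCompact_closedBall 0 1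
  have hmemK : ∀ k, U k ∈ {A : Matrix (Fin n) (Fin n) ℂ | ∀ i j, A i j ∈ Metric.closedBall (0:ℂ) 1} := by
    intro k i j
    have h : U k * star (U k) = 1 := Matrix.mem_unitaryGroup_iff.mp (hU k)
    have h1 : (U k * star (U k)) i i = 1 := by rw [h]; simp [Matrix.one_apply]
    rw [Matrix.mul_apply] at h1
    have h2 : ∀ l, (star (U k)) l i = starRingEnd ℂ (U k i l) := fun l => rfl
    simp only [h2] at h1
    have h3 : ∑ l, (Complex.normSq (U k i l) : ℂ) = 1 := by simpa [Complex.mul_conj] using h1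
    have h4 : ∑ l, Complex.normSq (U k i l) = 1 := by exact_mod_cast h3
    have h5 : Complex.normSq (U k i j) ≤ 1 := by
      rw [← h4]
      exact Finset.single_le_sum (fun l _ => Complex.normSq_nonneg _) (Finset.mem_univ j)
    rw [Metric.mem_closedBall, dist_zero_right]
    have h6 := Complex.normSq_eq_norm_sq (U k i j)
    have habs : ‖U k i j‖ ≤ 1 := by nlinarith [norm_nonneg (U k i j)]
    simpa using habs
  -- the main matrix-level convergence
  have key : Tendsto (fun k => U k * Matrix.diagonal (fun i' => (f (x k i') : ℂ)) * star (U k))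
      atTop (nhds (V * Matrix.diagonal (fun i' => (f (y i') : ℂ)) * star V)) := by
    apply tendsto_of_subseq_tendsto
    intro ns hns
    obtain ⟨W, hWK, φ, hφ, hUW⟩ := hK.tendsto_subseq (fun k => hmemK (ns k))
    set ψ : ℕ → ℕ := fun k => ns (φ k) with hψdef
    have hψ : Tendsto ψ atTop atTop := hns.comp hφ.tendsto_atTop
    have hUψ : Tendsto (fun k => U (ψ k)) atTop (nhds W) := hUW
    -- W is unitary
    have hW1 : W * star W = 1 := by
      have hc : Continuous (fun A : Matrix (Fin n) (Fin n) ℂ => A * star A) :=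
        continuous_id.matrix_mul continuous_id.star
      have h := (hc.tendsto W).comp hUψ
      have heq : ∀ k, U (ψ k) * star (U (ψ k)) = 1 := fun k =>
        Matrix.mem_unitaryGroup_iff.mp (hU (ψ k))
      simp only [Function.comp_def, heq] at h
      exact tendsto_nhds_unique h tendsto_const_nhds
    have hW2 : star W * W = 1 := mul_eq_one_comm.mp hW1
    -- convergence of S along ψ
    have hSψ : ∀ r, Tendsto (fun k => S (ψ k) r) atTop (nhds (T r)) := fun r =>
      (hSmat r).comp hψ
    -- limiting eigenvalues
    set z : Fin n → Fin d → ℝ := fun i r => ((star W * T r * W) i i).re with hzdef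
    have hxz : ∀ i r, Tendsto (fun k => x (ψ k) i r) atTop (nhds (z i r)) := by
      intro i r
      have hc2 : Continuous (fun p : Matrix (Fin n) (Fin n) ℂ × Matrix (Fin n) (Fin n) ℂ =>
          ((star p.1 * p.2 * p.1) i i).re) :=
        Complex.continuous_re.comp
          (((continuous_fst.star.matrix_mul continuous_snd).matrix_mul
            continuous_fst).matrix_elem i i)
      have hp : Tendsto (fun k => (U (ψ k), S (ψ k) r)) atTop (nhds (W, T r)) :=
        hUψ.prodMk_nhds (hSψ r)
      have h := (hc2.tendsto (W, T r)).comp hp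
      have hfe : (fun k => x (ψ k) i r)
          = fun k => ((star (U (ψ k)) * S (ψ k) r * U (ψ k)) i i).re := by
        funext k
        rw [← hxentry (ψ k) i r, Complex.ofReal_re]
      rw [hfe]
      exact h
    -- T r = W D_z W*
    have hTz : ∀ r, T r = W * Matrix.diagonal (fun i => (z i r : ℂ)) * star W := by
      intro r
      have hv : Tendsto (fun k => fun i => (x (ψ k) i r : ℂ)) atTop
          (nhds fun i => (z i r : ℂ)) :=
        tendsto_pi_nhds.mpr fun i => (Complex.continuous_ofReal.tendsto _).comp (hxz i r)
      have h := (hc3.tendsto (W, fun i => (z i r : ℂ))).comp (hUψ.prodMk_nhds hv)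
      have hfe : ((fun p : Matrix (Fin n) (Fin n) ℂ × (Fin n → ℂ) =>
            p.1 * Matrix.diagonal p.2 * star p.1)
          ∘ fun k => (U (ψ k), fun i => (x (ψ k) i r : ℂ)))
          = fun k => S (ψ k) r := by
        funext k
        simp only [Function.comp_apply]
        rw [hdiagS (ψ k) r]
      rw [hfe] at h
      exact tendsto_nhds_unique (hSψ r) h
    -- intertwiner
    set M : Matrix (Fin n) (Fin n) ℂ := star V * W with hMdef
    have hM1 : star M * M = 1 := by
      have : star M = star W * V := by rw [hMdef, star_mul, star_star]
      rw [this, hMdef, Matrix.mul_assoc, ← Matrix.mul_assoc V, hVmul, Matrix.one_mul, hW2]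
    have hM2 : M * star M = 1 := mul_eq_one_comm.mp hM1
    have hcomm : ∀ r, M * Matrix.diagonal (fun i => (z i r : ℂ))
        = Matrix.diagonal (fun i => (y i r : ℂ)) * M := by
      intro r
      have h0 : W * Matrix.diagonal (fun i => (z i r : ℂ)) * star W
          = V * Matrix.diagonal (fun i => (y i r : ℂ)) * star V := (hTz r).symm.trans (hdiagT r)
      have l1 : star V * (W * Matrix.diagonal (fun i => (z i r : ℂ)) * star W) * W
          = M * Matrix.diagonal (fun i => (z i r : ℂ)) := by
        simp only [Matrix.mul_assoc, hW2, Matrix.mul_one]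
        rw [← Matrix.mul_assoc]
      have l2 : star V * (V * Matrix.diagonal (fun i => (y i r : ℂ)) * star V) * W
          = Matrix.diagonal (fun i => (y i r : ℂ)) * M := by
        simp only [Matrix.mul_assoc]
        rw [← Matrix.mul_assoc, hVmul', Matrix.one_mul]
      rw [← l1, ← l2, h0]
    have hmatch : ∀ i j, M i j ≠ 0 → z j = y i := by
      intro i j hij
      funext r
      have h1 : (M * Matrix.diagonal (fun i => (z i r : ℂ))) i j
          = (Matrix.diagonal (fun i => (y i r : ℂ)) * M) i j := by rw [hcomm r]
      rw [Matrix.mul_diagonal, Matrix.diagonal_mul] at h1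
      have h2 : (z j r : ℂ) = (y i r : ℂ) :=
        mul_left_cancel₀ hij (h1.trans (mul_comm _ _))
      exact_mod_cast h2
    have hzΩ : ∀ j, z j ∈ Ω := by
      intro j
      obtain ⟨i, hi⟩ : ∃ i, M i j ≠ 0 := by
        by_contra hcon
        push_neg at hcon
        have h0 : (star M * M) j j = 0 := by
          rw [Matrix.mul_apply]
          exact Finset.sum_eq_zero fun l _ => by rw [hcon l, mul_zero]
        rw [hM1] at h0
        simp [Matrix.one_apply] at h0
      rw [hmatch i j hi]
      exact hyΩ i
    -- convergence of the f-values
    have hfz : ∀ i', Tendsto (fun k => (f (x (ψ k) i') : ℂ)) atTop (nhds (f (z i') : ℂ)) := by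
      intro i'
      have hxi : Tendsto (fun k => x (ψ k) i') atTop (nhds (z i')) :=
        tendsto_pi_nhds.mpr fun r => hxz i' r
      have hfc : ContinuousAt f (z i') := hf.continuousAt (hΩ.mem_nhds (hzΩ i'))
      exact (Complex.continuous_ofReal.tendsto _).comp (hfc.tendsto.comp hxi)
    have hfinal : Tendsto (fun k => U (ψ k) * Matrix.diagonal (fun i' => (f (x (ψ k) i') : ℂ))
        * star (U (ψ k))) atTop
        (nhds (W * Matrix.diagonal (fun i' => (f (z i') : ℂ)) * star W)) := by
      have hv : Tendsto (fun k => fun i' => (f (x (ψ k) i') : ℂ)) atTop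
          (nhds fun i' => (f (z i') : ℂ)) := tendsto_pi_nhds.mpr hfz
      have h := (hc3.tendsto (W, fun i' => (f (z i') : ℂ))).comp (hUψ.prodMk_nhds hv)
      have hfe : ((fun p : Matrix (Fin n) (Fin n) ℂ × (Fin n → ℂ) =>
            p.1 * Matrix.diagonal p.2 * star p.1)
          ∘ fun k => (U (ψ k), fun i' => (f (x (ψ k) i') : ℂ)))
          = fun k => U (ψ k) * Matrix.diagonal (fun i' => (f (x (ψ k) i') : ℂ))
            * star (U (ψ k)) := by
        funext k
        simp only [Function.comp_apply]
      rw [hfe] at h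
      exact h
    -- identify the limit
    have hcommf : M * Matrix.diagonal (fun i' => (f (z i') : ℂ))
        = Matrix.diagonal (fun i' => (f (y i') : ℂ)) * M := by
      ext i j
      rw [Matrix.mul_diagonal, Matrix.diagonal_mul]
      by_cases h : M i j = 0
      · rw [h, zero_mul, mul_zero]
      · rw [hmatch i j h]; ring
    have hWV : W * Matrix.diagonal (fun i' => (f (z i') : ℂ)) * star W
        = V * Matrix.diagonal (fun i' => (f (y i') : ℂ)) * star V := by
      have hVM : V * M = W := by
        rw [hMdef, ← Matrix.mul_assoc, hVmul, Matrix.one_mul]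
      have hsW : star W = star M * star V := by rw [← hVM, star_mul]
      have h9 : M * Matrix.diagonal (fun i' => (f (z i') : ℂ)) * star M
          = Matrix.diagonal (fun i' => (f (y i') : ℂ)) := by
        rw [hcommf, Matrix.mul_assoc, hM2, Matrix.mul_one]
      calc W * Matrix.diagonal (fun i' => (f (z i') : ℂ)) * star W
          = V * M * Matrix.diagonal (fun i' => (f (z i') : ℂ)) * (star M * star V) := by
            rw [hVM, ← hsW]
        _ = V * (M * Matrix.diagonal (fun i' => (f (z i') : ℂ)) * star M) * star V := by
            simp only [Matrix.mul_assoc]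
        _ = V * Matrix.diagonal (fun i' => (f (y i') : ℂ)) * star V := by rw [h9]
    exact ⟨φ, hWV ▸ hfinal⟩
  intro i j
  exact ((continuous_id.matrix_elem i j).tendsto _).comp key
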